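/- At a point with geodesic normal coordinates, Σ_{μ,ν} g^{kl} π_{μν} ∂_k π_{αμ} ∂_l π_{βν} = [g^{ij} g^{kl} A_{ik} ⊗ A_{jl}]_{αβ}. -/

import Mathlib

open scoped RealInnerProductSpace

private lemma sum_rot {α β γ M : Type*} [Fintype α] [Fintype β] [Fintype γ]
    [AddCommMonoid M] (f : α → β → γ → M) :
    (∑ a, ∑ b, ∑ c, f a b c) = ∑ c, ∑ a, ∑ b, f a b c := by
  rw [show (∑ a, ∑ b, ∑ c, f a b c) = ∑ a, ∑ c, ∑ b, f a b c from
    Finset.sum_congr rfl fun a _ => Finset.sum_comm, Finset.sum_comm]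

/-- At a point in geodesic normal coordinates (`g = δ`),
`Σ_{μ,ν} g^{kl} π_{μν} ∂_k π_{αμ} ∂_l π_{βν} = [g^{ij} g^{kl} A_{ik} ⊗ A_{jl}]_{αβ}`. -/
theorem contracted_pi_dpi_dpi (n m : ℕ)
    (DX : Fin m → EuclideanSpace ℝ (Fin n))
    (A : Fin m → Fin m → EuclideanSpace ℝ (Fin n))
    (g : Matrix (Fin m) (Fin m) ℝ) (hg : ∀ i j, g i j = ⟪DX i, DX j⟫)
    (hnormal : ∀ i j k, ⟪A i j, DX k⟫ = 0)
    (hgδ : g = 1)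
    (π : Matrix (Fin n) (Fin n) ℝ)
    (hπ : ∀ α β, π α β = ∑ i, ∑ j, g⁻¹ i j * DX i α * DX j β)
    (Dπ : Fin m → Matrix (Fin n) (Fin n) ℝ)
    (hDπ : ∀ k α β, Dπ k α β =
      ∑ i, ∑ j, g⁻¹ i j * (A i k α * DX j β + DX i α * A j k β)) :
    ∀ α β, ∑ μ, ∑ ν, ∑ k, ∑ l, g⁻¹ k l * π μ ν * Dπ k α μ * Dπ l β ν =
      ∑ i, ∑ j, ∑ k, ∑ l, g⁻¹ i j * g⁻¹ k l * (A i k α * A j l β) := by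
  intro α β
  subst hgδ
  simp only [inv_one, Matrix.one_apply] at hπ hDπ ⊢
  have horth : ∀ i j, (∑ x, DX i x * DX j x) = if i = j then (1:ℝ) else 0 := by
    intro i j
    have h := (hg i j).symm
    simpa [PiLp.inner_apply, RCLike.inner_apply, Matrix.one_apply, mul_comm] using h
  have hA : ∀ i j k, (∑ x, A i j x * DX k x) = 0 := by
    intro i j k
    have h := hnormal i j k
    simpa [PiLp.inner_apply, RCLike.inner_apply, mul_comm] using h
  have hA' : ∀ i j k, (∑ x, DX k x * A i j x) = 0 := by
    intro i j k
    simpa [mul_comm] using hA i j k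
  have hπ' : ∀ a b, π a b = ∑ i, DX i a * DX i b := by
    intro a b
    rw [hπ]
    simp [ite_mul, Finset.sum_ite_eq]
  have hDπ' : ∀ k a b, Dπ k a b = ∑ i, (A i k a * DX i b + DX i a * A i k b) := by
    intro k a b
    rw [hDπ]
    simp [ite_mul, Finset.sum_ite_eq]
  have key : ∀ i k γ, (∑ μ, DX i μ * Dπ k γ μ) = A i k γ := by
    intro i k γ
    have h1 : (∑ μ, DX i μ * Dπ k γ μ)
        = ∑ j, ((A j k γ * ∑ μ, DX i μ * DX j μ) + DX j γ * ∑ μ, DX i μ * A j k μ) := by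
      simp only [hDπ', Finset.mul_sum]
      rw [Finset.sum_comm]
      refine Finset.sum_congr rfl fun j _ => ?_
      simp only [Finset.mul_sum, ← Finset.sum_add_distrib]
      refine Finset.sum_congr rfl fun μ _ => ?_
      ring
    rw [h1]
    simp [horth, hA', mul_ite, Finset.sum_ite_eq]
  calc (∑ μ, ∑ ν, ∑ k, ∑ l, (if k = l then (1:ℝ) else 0) * π μ ν * Dπ k α μ * Dπ l β ν)
      = ∑ μ, ∑ ν, ∑ k, π μ ν * Dπ k α μ * Dπ k β ν := by
        refine Finset.sum_congr rfl fun μ _ => ?_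
        refine Finset.sum_congr rfl fun ν _ => ?_
        refine Finset.sum_congr rfl fun k _ => ?_
        simp [ite_mul, Finset.sum_ite_eq]
    _ = ∑ k, ∑ μ, ∑ ν, π μ ν * Dπ k α μ * Dπ k β ν := sum_rot _
    _ = ∑ k, ∑ i, A i k α * A i k β := by
        refine Finset.sum_congr rfl fun k _ => ?_
        have h2 : (∑ μ, ∑ ν, π μ ν * Dπ k α μ * Dπ k β ν)
            = ∑ μ, ∑ ν, ∑ i, (DX i μ * Dπ k α μ) * (DX i ν * Dπ k β ν) := by
          refine Finset.sum_congr rfl fun μ _ => ?_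
          refine Finset.sum_congr rfl fun ν _ => ?_
          rw [hπ', Finset.sum_mul, Finset.sum_mul]
          refine Finset.sum_congr rfl fun i _ => ?_
          ring
        rw [h2, sum_rot]
        refine Finset.sum_congr rfl fun i _ => ?_
        rw [← Finset.sum_mul_sum, key, key]
    _ = ∑ i, ∑ j, ∑ k, ∑ l,
          (if i = j then (1:ℝ) else 0) * (if k = l then (1:ℝ) else 0) * (A i k α * A j l β) := by
        rw [Finset.sum_comm]
        refine Finset.sum_congr rfl fun i _ => ?_
        simp [ite_mul, Finset.sum_ite_eq]
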